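/- Let w : ℝⁿ → ℝ be a differentiable choice welfare function (monotone, translation invariant, convex) and set q(μ) = ∇w(μ). Then q is a substitutable choice model (for all i ≠ j, all μ, and all t > 0, q_j(μ + t·e_i) ≤ q_j(μ)) if and only if w is submodular, i.e., w(x∨y) + w(x∧y) ≤ w(x) + w(y) for all x, y ∈ ℝⁿ, where ∨ and ∧ denote componentwise maximum and minimum. -/

import Mathlib

open scoped BigOperators
open MeasureTheory

noncomputable section

/-- The simplex Δ_{n-1} in ℝⁿ. -/
def choiceSimplex (n : ℕ) : Set (Fin n → ℝ) :=
  {x | (∀ i, 0 ≤ x i) ∧ ∑ i, x i = 1}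

/-- A choice welfare function: monotone, translation invariant, convex. -/
def IsCWF {n : ℕ} (w : (Fin n → ℝ) → ℝ) : Prop :=
  (∀ μ₁ μ₂ : Fin n → ℝ, μ₂ ≤ μ₁ → w μ₂ ≤ w μ₁) ∧
  (∀ (μ : Fin n → ℝ) (t : ℝ), w (μ + fun _ => t) = w μ + t) ∧
  ConvexOn ℝ Set.univ w

/-- The gradient of w at μ, whose i-th component is the partial derivative ∂w/∂μᵢ. -/
def grad {n : ℕ} (w : (Fin n → ℝ) → ℝ) (μ : Fin n → ℝ) : Fin n → ℝ :=
  fun i => fderiv ℝ w μ (Pi.single i 1)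

private lemma pi_repr {n : ℕ} (v : Fin n → ℝ) :
    v = ∑ i, v i • (Pi.single i 1 : Fin n → ℝ) := by
  funext j
  rw [Finset.sum_apply]
  simp [Pi.single_apply]

private lemma line_hasDerivAt {n : ℕ} {w : (Fin n → ℝ) → ℝ} (hdiff : Differentiable ℝ w)
    (μ v : Fin n → ℝ) (t : ℝ) :
    HasDerivAt (fun s : ℝ => w (μ + s • v)) (fderiv ℝ w (μ + t • v) v) t := by
  have h1 : HasDerivAt (fun s : ℝ => μ + s • v) v t := by
    simpa using ((hasDerivAt_id t).smul_const v).const_add μ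
  exact ((hdiff (μ + t • v)).hasFDerivAt).comp_hasDerivAt t h1

private lemma fderiv_apply_eq {n : ℕ} (w : (Fin n → ℝ) → ℝ) (μ v : Fin n → ℝ) :
    fderiv ℝ w μ v = ∑ i, v i * grad w μ i := by
  conv_lhs => rw [pi_repr v]
  rw [map_sum]
  simp [grad, smul_eq_mul]

private lemma grad_anti {n : ℕ} {w : (Fin n → ℝ) → ℝ}
    (hsub : ∀ i j : Fin n, i ≠ j → ∀ (μ : Fin n → ℝ) (t : ℝ), 0 < t →
      grad w (μ + t • (Pi.single i 1 : Fin n → ℝ)) j ≤ grad w μ j)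
    (j : Fin n) (μ v : Fin n → ℝ) (hv : ∀ i, 0 ≤ v i) (hvj : v j = 0) :
    grad w (μ + v) j ≤ grad w μ j := by
  have key : ∀ S : Finset (Fin n),
      grad w (μ + ∑ i ∈ S, v i • (Pi.single i 1 : Fin n → ℝ)) j ≤ grad w μ j := by
    intro S
    induction S using Finset.induction with
    | empty => simp
    | insert _ _ hnot ih =>
      rename_i i S
      rw [Finset.sum_insert hnot]
      rcases eq_or_lt_of_le (hv i) with h0 | hpos
      · rw [← h0]; simpa using ih
      · have hij : i ≠ j := by rintro rfl; rw [hvj] at hpos; exact lt_irrefl _ hpos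
        have hre : μ + (v i • (Pi.single i 1 : Fin n → ℝ) +
              ∑ k ∈ S, v k • (Pi.single k 1 : Fin n → ℝ))
            = (μ + ∑ k ∈ S, v k • (Pi.single k 1 : Fin n → ℝ)) +
              v i • (Pi.single i 1 : Fin n → ℝ) := by
          abel
        rw [hre]
        exact le_trans (hsub i j hij _ (v i) hpos) ih
  have hv' := key Finset.univ
  rwa [← pi_repr v] at hv'

theorem stmt_13 (n : ℕ) (w : (Fin n → ℝ) → ℝ)
    (hw : IsCWF w) (hdiff : Differentiable ℝ w) :
    (∀ i j : Fin n, i ≠ j → ∀ (μ : Fin n → ℝ) (t : ℝ), 0 < t →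
      grad w (μ + t • (Pi.single i 1 : Fin n → ℝ)) j ≤ grad w μ j) ↔
    (∀ x y : Fin n → ℝ, w (x ⊔ y) + w (x ⊓ y) ≤ w x + w y) := by
  constructor
  · -- substitutable → submodular
    intro hsub x y
    set m : Fin n → ℝ := x ⊓ y with hm
    set a : Fin n → ℝ := x - m with ha
    set b : Fin n → ℝ := y - m with hb
    have ha0 : ∀ k, 0 ≤ a k := by
      intro k
      have : m k ≤ x k := inf_le_left (b := y k)
      simpa [ha, hm] using sub_nonneg.mpr this
    have hb0 : ∀ k, 0 ≤ b k := by
      intro k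
      have : m k ≤ y k := inf_le_right (a := x k)
      simpa [hb, hm] using sub_nonneg.mpr this
    have hyab : ∀ t : ℝ, y + t • a = (m + t • a) + b := by
      intro t; funext k; simp [hb]; ring
    have habi : ∀ k, 0 < a k → b k = 0 := by
      intro k hk
      have ha' : a k = x k - min (x k) (y k) := by
        simp [ha, hm, Pi.inf_apply]
      have hb' : b k = y k - min (x k) (y k) := by
        simp [hb, hm, Pi.inf_apply]
      rcases min_cases (x k) (y k) with h | h
      · rw [ha', h.1] at hk; linarith
      · rw [hb', h.1]; ring
    -- the function g
    set g : ℝ → ℝ := fun t => w (y + t • a) - w (m + t • a) with hg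
    have hgd : ∀ t : ℝ, HasDerivAt g
        (fderiv ℝ w (y + t • a) a - fderiv ℝ w (m + t • a) a) t :=
      fun t => (line_hasDerivAt hdiff y a t).sub (line_hasDerivAt hdiff m a t)
    have hgdiff : Differentiable ℝ g := fun t => (hgd t).differentiableAt
    have hderiv : ∀ t : ℝ, deriv g t ≤ 0 := by
      intro t
      rw [(hgd t).deriv, sub_nonpos, fderiv_apply_eq, fderiv_apply_eq]
      apply Finset.sum_le_sum
      intro i _
      rcases eq_or_lt_of_le (ha0 i) with h0 | hpos
      · simp [← h0]
      · apply mul_le_mul_of_nonneg_left _ (le_of_lt hpos)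
        rw [hyab t]
        exact grad_anti hsub i (m + t • a) b hb0 (habi i hpos)
    have hanti : Antitone g := antitone_of_deriv_nonpos hgdiff hderiv
    have h10 : g 1 ≤ g 0 := hanti (by norm_num)
    have hxy : y + a = x ⊔ y := by
      funext k
      have := min_add_max (x k) (y k)
      simp only [ha, hm, Pi.add_apply, Pi.sub_apply, Pi.inf_apply, Pi.sup_apply] at *
      linarith
    have hx : m + a = x := by funext k; simp [ha]
    have hg1 : g 1 = w (x ⊔ y) - w x := by simp [hg, hxy, hx]
    have hg0 : g 0 = w y - w m := by simp [hg]
    rw [hg1, hg0] at h10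
    linarith
  · -- submodular → substitutable
    intro hsm i j hij μ t ht
    set ei : Fin n → ℝ := Pi.single i 1 with hei
    set ej : Fin n → ℝ := Pi.single j 1 with hej
    set d : ℝ → ℝ := fun s => w (μ + t • ei + s • ej) - w (μ + s • ej) with hd
    set D : ℝ := grad w (μ + t • ei) j - grad w μ j with hD
    have hdD : HasDerivAt d D 0 := by
      have h1 := line_hasDerivAt hdiff (μ + t • ei) ej 0
      have h2 := line_hasDerivAt hdiff μ ej 0
      simp only [zero_smul, add_zero] at h1 h2
      have h3 := h1.sub h2
      simp only [hD, grad]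
      exact h3
    have hle : ∀ s : ℝ, 0 < s → d s ≤ d 0 := by
      intro s hs
      have hsup : (μ + t • ei) ⊔ (μ + s • ej) = μ + t • ei + s • ej := by
        funext k
        simp only [Pi.sup_apply, Pi.add_apply, Pi.smul_apply, smul_eq_mul, hei, hej,
          Pi.single_apply]
        by_cases hki : k = i <;> by_cases hkj : k = j
        · exact absurd (hki.symm.trans hkj) hij
        · rw [if_pos hki, if_neg hkj, mul_one, mul_zero, add_zero, add_zero,
            sup_eq_left.mpr (by linarith)]
        · rw [if_neg hki, if_pos hkj, mul_one, mul_zero, add_zero,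
            sup_eq_right.mpr (by linarith)]
        · simp [if_neg hki, if_neg hkj]
      have hinf : (μ + t • ei) ⊓ (μ + s • ej) = μ := by
        funext k
        simp only [Pi.inf_apply, Pi.add_apply, Pi.smul_apply, smul_eq_mul, hei, hej,
          Pi.single_apply]
        by_cases hki : k = i <;> by_cases hkj : k = j
        · exact absurd (hki.symm.trans hkj) hij
        · rw [if_pos hki, if_neg hkj, mul_one, mul_zero, add_zero,
            inf_eq_right.mpr (by linarith)]
        · rw [if_neg hki, if_pos hkj, mul_one, mul_zero, add_zero,
            inf_eq_left.mpr (by linarith)]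
        · simp [if_neg hki, if_neg hkj]
      have := hsm (μ + t • ei) (μ + s • ej)
      rw [hsup, hinf] at this
      simp only [hd]
      simp only [zero_smul, add_zero]
      linarith
    -- conclude D ≤ 0
    have hslope := hasDerivAt_iff_tendsto_slope.mp hdD
    have hmono : nhdsWithin (0:ℝ) (Set.Ioi 0) ≤ nhdsWithin 0 {(0:ℝ)}ᶜ :=
      nhdsWithin_mono _ (fun s hs => ne_of_gt hs)
    have htend : Filter.Tendsto (slope d 0) (nhdsWithin (0:ℝ) (Set.Ioi 0)) (nhds D) :=
      hslope.mono_left hmono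
    have hD0 : D ≤ 0 := by
      refine le_of_tendsto htend ?_
      filter_upwards [self_mem_nhdsWithin] with s hs
      have hs' : (0:ℝ) < s := hs
      have := hle s hs'
      rw [slope_def_field]
      apply div_nonpos_of_nonpos_of_nonneg <;> linarith
    rw [hD] at hD0
    linarith
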